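/- Let N > 1, κ ∈ {−1, 0, 1}, K = κ(N−1), and D > 0, with D < π in the case κ = 1. For a ∈ (0,D) let m_a = Vol_{K,N}(D)·h^a_{K,N,D}·𝓛¹ restricted to [0,D]. Then for every ε > 0 there exists ā > 0, depending only on N, K, D, ε, such that for every a ∈ (0, ā) and every r ∈ (0, a]: |m_a([0,r]) / (N ω_N a^{N−1} r) − 1| ≤ ε; i.e. m_a([0,r]) = N ω_N a^{N−1} r (1 + o(1)). -/

import Mathlib

open MeasureTheory Filter Set

/-- The function `s_κ`. -/
noncomputable def sK (κ θ : ℝ) : ℝ :=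
  if 0 < κ then Real.sin (Real.sqrt κ * θ) / Real.sqrt κ
  else if κ = 0 then θ
  else Real.sinh (Real.sqrt (-κ) * θ) / Real.sqrt (-κ)

/-- `k_D = ∫₀^D s_κ(t)^(N-1) dt`. -/
noncomputable def kD (κ N D : ℝ) : ℝ := ∫ t in (0:ℝ)..D, sK κ t ^ (N - 1)

/-- The function `f_{K,N,D}` (with `K = κ(N-1)`). -/
noncomputable def fKND (κ N D x : ℝ) : ℝ :=
  ((∫ y in (0:ℝ)..x, (sK κ (D - y) / sK κ (D - x)) ^ (N - 1)) +
    ∫ y in x..D, (sK κ y / sK κ x) ^ (N - 1))⁻¹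

/-- The model density `h^a_{K,N,D}` (with `K = κ(N-1)`). -/
noncomputable def hKND (κ N D a x : ℝ) : ℝ :=
  if x ≤ a then fKND κ N D a * (sK κ (D - x) / sK κ (D - a)) ^ (N - 1)
  else fKND κ N D a * (sK κ x / sK κ a) ^ (N - 1)

/-- The volume map `v_{K,N,D}(a) = ∫₀^a h^a_{K,N,D}`. -/
noncomputable def vKND (κ N D a : ℝ) : ℝ := ∫ x in (0:ℝ)..a, hKND κ N D a x

/-- `ω_N = π^(N/2)/Γ(N/2+1)`. -/
noncomputable def omegaN (N : ℝ) : ℝ := Real.pi ^ (N / 2) / Real.Gamma (N / 2 + 1)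

/-- `Vol_{K,N}(r) = N ω_N ∫₀^r s_κ(t)^(N-1) dt` (with `K = κ(N-1)`). -/
noncomputable def VolKN (κ N r : ℝ) : ℝ := N * omegaN N * ∫ t in (0:ℝ)..r, sK κ t ^ (N - 1)

/-- The coefficient `σ^{(s)}_{K,N-1}(θ)`, valued in `[0,∞]`. -/
noncomputable def sigmaE (K N s θ : ℝ) : ENNReal :=
  if (N - 1) * Real.pi ^ 2 ≤ K * θ ^ 2 then ⊤
  else ENNReal.ofReal (sK (K / (N - 1)) (s * θ) / sK (K / (N - 1)) θ)

/-- A nonnegative continuous function `h` on the interval `I` is an `MCP(K,N)` density. -/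
def IsMCPDensity (K N : ℝ) (I : Set ℝ) (h : ℝ → ℝ) : Prop :=
  ContinuousOn h I ∧ (∀ x ∈ I, 0 ≤ h x) ∧
    ∀ x₀ ∈ I, ∀ x₁ ∈ I, ∀ t ∈ Set.Icc (0:ℝ) 1,
      sigmaE K N (1 - t) |x₁ - x₀| ^ (N - 1) * ENNReal.ofReal (h x₀) ≤
        ENNReal.ofReal (h (t * x₁ + (1 - t) * x₀))

/-- The measure `h·𝓛¹` restricted to `[0,D]`. -/
noncomputable def mcMeasure (D : ℝ) (h : ℝ → ℝ) : Measure ℝ :=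
  (volume.restrict (Set.Icc 0 D)).withDensity fun x => ENNReal.ofReal (h x)

/-- The outer Minkowski content `μ⁺(E) = liminf_{ρ→0⁺} (μ(E^ρ) - μ(E))/ρ`. -/
noncomputable def minkContent (μ : Measure ℝ) (E : Set ℝ) : ℝ :=
  Filter.liminf (fun ρ : ℝ => ((μ (Metric.thickening ρ E)).toReal - (μ E).toReal) / ρ)
    (nhdsWithin 0 (Set.Ioi 0))

set_option linter.unusedVariables false
set_option linter.unusedSectionVars false

namespace Stmt10Aux

lemma sK_one (θ : ℝ) : sK 1 θ = Real.sin θ := by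
  simp [sK, Real.sqrt_one]

lemma sK_zero (θ : ℝ) : sK 0 θ = θ := by simp [sK]

lemma sK_neg_one (θ : ℝ) : sK (-1) θ = Real.sinh θ := by
  norm_num [sK, Real.sqrt_one]

-- the sin/θ → 1 limit
lemma sin_div_lim : Tendsto (fun θ : ℝ => Real.sin θ / θ) (nhdsWithin 0 (Ioi 0)) (nhds 1) := by
  have h : HasDerivAt Real.sin 1 0 := by simpa using Real.hasDerivAt_sin 0
  have := hasDerivAt_iff_tendsto_slope.mp h
  have h2 := this.mono_left (nhdsWithin_mono _ (fun x hx => (ne_of_gt hx : x ≠ 0)))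
  refine h2.congr (fun x => ?_)
  simp [slope, Real.sin_zero]; ring

lemma sinh_div_lim : Tendsto (fun θ : ℝ => Real.sinh θ / θ) (nhdsWithin 0 (Ioi 0)) (nhds 1) := by
  have h : HasDerivAt Real.sinh 1 0 := by simpa using Real.hasDerivAt_sinh 0
  have := hasDerivAt_iff_tendsto_slope.mp h
  have h2 := this.mono_left (nhdsWithin_mono _ (fun x hx => (ne_of_gt hx : x ≠ 0)))
  refine h2.congr (fun x => ?_)
  simp [slope, Real.sinh_zero]; ring

noncomputable def gg (κ N D : ℝ) (x : ℝ) : ℝ := sK κ (D - x) ^ (N - 1)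
noncomputable def sp (κ N : ℝ) (x : ℝ) : ℝ := sK κ x ^ (N - 1)
noncomputable def denom (κ N D a : ℝ) : ℝ :=
  (∫ y in (0:ℝ)..a, gg κ N D y) / gg κ N D a +
    (kD κ N D - ∫ t in (0:ℝ)..a, sp κ N t) / sp κ N a

variable {κ N D : ℝ}

lemma fKND_eq (hN : 1 < N) (hD : 0 < D)
    (hc : Continuous (sK κ))
    (hpos : ∀ θ ∈ Set.Ioc (0:ℝ) D, 0 < sK κ θ)
    {a : ℝ} (ha : a ∈ Set.Ioo (0:ℝ) D) :
    fKND κ N D a = (denom κ N D a)⁻¹ := by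
  have hsp : Continuous (sp κ N) := by
    apply Continuous.rpow_const hc; exact fun x => Or.inr (by linarith)
  have h1 : (∫ y in (0:ℝ)..a, (sK κ (D - y) / sK κ (D - a)) ^ (N - 1)) =
      (∫ y in (0:ℝ)..a, gg κ N D y) / gg κ N D a := by
    rw [← intervalIntegral.integral_div]
    apply intervalIntegral.integral_congr
    intro y hy
    rw [uIcc_of_le ha.1.le] at hy
    have h1 : 0 < sK κ (D - y) := hpos _ ⟨by linarith [hy.2, ha.2], by linarith [hy.1]⟩
    have h2 : 0 < sK κ (D - a) := hpos _ ⟨by linarith [ha.2], by linarith [ha.1.le]⟩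
    simp only [gg]
    rw [Real.div_rpow h1.le h2.le]
  have h2 : (∫ y in a..D, (sK κ y / sK κ a) ^ (N - 1)) =
      (kD κ N D - ∫ t in (0:ℝ)..a, sp κ N t) / sp κ N a := by
    have ha0 : 0 < sK κ a := hpos _ ⟨ha.1, ha.2.le⟩
    have e1 : (∫ y in a..D, (sK κ y / sK κ a) ^ (N - 1)) =
        (∫ y in a..D, sp κ N y) / sp κ N a := by
      rw [← intervalIntegral.integral_div]
      apply intervalIntegral.integral_congr
      intro y hy
      rw [uIcc_of_le ha.2.le] at hy
      have h1 : 0 < sK κ y := hpos _ ⟨lt_of_lt_of_le ha.1 hy.1, hy.2⟩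
      simp only [sp]
      rw [Real.div_rpow h1.le ha0.le]
    rw [e1]
    congr 1
    rw [show kD κ N D = ∫ t in (0:ℝ)..D, sp κ N t from rfl,
      ← intervalIntegral.integral_interval_sub_left (hsp.intervalIntegrable _ _)
        (hsp.intervalIntegrable _ _)]
  rw [fKND, h1, h2, denom]

lemma denom_pos (hN : 1 < N) (hD : 0 < D)
    (hc : Continuous (sK κ))
    (hpos : ∀ θ ∈ Set.Ioc (0:ℝ) D, 0 < sK κ θ)
    {a : ℝ} (ha : a ∈ Set.Ioo (0:ℝ) D) : 0 < denom κ N D a := by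
  have hsp : Continuous (sp κ N) := by
    apply Continuous.rpow_const hc; exact fun x => Or.inr (by linarith)
  have ga_pos : 0 < gg κ N D a := by
    apply Real.rpow_pos_of_pos (hpos _ ⟨by linarith [ha.2], by linarith [ha.1.le]⟩)
  have spa_pos : 0 < sp κ N a := Real.rpow_pos_of_pos (hpos _ ⟨ha.1, ha.2.le⟩) _
  have t1 : 0 ≤ (∫ y in (0:ℝ)..a, gg κ N D y) / gg κ N D a := by
    apply div_nonneg _ ga_pos.le
    apply intervalIntegral.integral_nonneg ha.1.le
    intro u hu
    exact (Real.rpow_pos_of_pos (hpos _ ⟨by linarith [hu.2, ha.2], by linarith [hu.1]⟩) _).le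
  have t2 : 0 < kD κ N D - ∫ t in (0:ℝ)..a, sp κ N t := by
    have : kD κ N D - (∫ t in (0:ℝ)..a, sp κ N t) = ∫ t in a..D, sp κ N t := by
      exact intervalIntegral.integral_interval_sub_left (hsp.intervalIntegrable _ _)
        (hsp.intervalIntegrable _ _)
    rw [this]
    apply intervalIntegral.intervalIntegral_pos_of_pos_on (hsp.intervalIntegrable _ _)
      (fun x hx => Real.rpow_pos_of_pos (hpos _ ⟨lt_trans ha.1 hx.1, hx.2.le⟩) _) ha.2
  have := div_pos t2 spa_pos
  unfold denom; linarith

lemma tendsto_Q (hN : 1 < N) (hD : 0 < D)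
    (hc : Continuous (sK κ))
    (hpos : ∀ θ ∈ Set.Ioc (0:ℝ) D, 0 < sK κ θ)
    (hlim : Tendsto (fun θ => sK κ θ / θ) (nhdsWithin 0 (Set.Ioi 0)) (nhds 1)) :
    Tendsto (fun a => a ^ (N - 1) * denom κ N D a) (nhdsWithin 0 (Set.Ioi 0))
      (nhds (kD κ N D)) := by
  have hN1 : (0:ℝ) < N - 1 := by linarith
  have hgg : Continuous (gg κ N D) := by
    apply Continuous.rpow_const (hc.comp (continuous_const.sub continuous_id))
    exact fun x => Or.inr hN1.le
  have hsp : Continuous (sp κ N) := by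
    apply Continuous.rpow_const hc; exact fun x => Or.inr hN1.le
  have S_pos : 0 < gg κ N D 0 := by
    apply Real.rpow_pos_of_pos
    rw [sub_zero]; exact hpos _ ⟨hD, le_refl _⟩
  -- component limits
  have t1 : Tendsto (fun a : ℝ => a ^ (N - 1)) (nhdsWithin 0 (Set.Ioi 0)) (nhds 0) := by
    have : ContinuousAt (fun a : ℝ => a ^ (N - 1)) 0 :=
      Real.continuousAt_rpow_const 0 (N - 1) (Or.inr hN1.le)
    have h := this.tendsto.mono_left (nhdsWithin_le_nhds (s := Set.Ioi (0:ℝ)))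
    rwa [Real.zero_rpow (ne_of_gt hN1)] at h
  have t2 : Tendsto (fun a : ℝ => ∫ y in (0:ℝ)..a, gg κ N D y)
      (nhdsWithin 0 (Set.Ioi 0)) (nhds 0) := by
    have hco : Continuous fun b => ∫ y in (0:ℝ)..b, gg κ N D y :=
      intervalIntegral.continuous_primitive (fun a b => hgg.intervalIntegrable a b) 0
    have := (hco.tendsto 0).mono_left (nhdsWithin_le_nhds (s := Set.Ioi (0:ℝ)))
    simpa using this
  have t3 : Tendsto (fun a : ℝ => gg κ N D a) (nhdsWithin 0 (Set.Ioi 0)) (nhds (gg κ N D 0)) :=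
    (hgg.tendsto 0).mono_left nhdsWithin_le_nhds
  have t4 : Tendsto (fun a : ℝ => (a / sK κ a) ^ (N - 1)) (nhdsWithin 0 (Set.Ioi 0)) (nhds 1) := by
    have h1 : Tendsto (fun a : ℝ => a / sK κ a) (nhdsWithin 0 (Set.Ioi 0)) (nhds 1) := by
      have := hlim.inv₀ one_ne_zero
      rw [inv_one] at this
      refine this.congr (fun a => ?_)
      rw [inv_div]
    have h2 : ContinuousAt (fun x : ℝ => x ^ (N - 1)) 1 :=
      Real.continuousAt_rpow_const 1 (N - 1) (Or.inl one_ne_zero)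
    have := h2.tendsto.comp h1
    rwa [Real.one_rpow] at this
  have t5 : Tendsto (fun a : ℝ => kD κ N D - ∫ t in (0:ℝ)..a, sp κ N t)
      (nhdsWithin 0 (Set.Ioi 0)) (nhds (kD κ N D)) := by
    have hco : Continuous fun b => ∫ y in (0:ℝ)..b, sp κ N y :=
      intervalIntegral.continuous_primitive (fun a b => hsp.intervalIntegrable a b) 0
    have h := (hco.tendsto 0).mono_left (nhdsWithin_le_nhds (s := Set.Ioi (0:ℝ)))
    simp only [intervalIntegral.integral_same] at h
    simpa using tendsto_const_nhds.sub h
  -- combined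
  have big : Tendsto (fun a : ℝ =>
      a ^ (N - 1) * ((∫ y in (0:ℝ)..a, gg κ N D y) / gg κ N D a) +
        (a / sK κ a) ^ (N - 1) * (kD κ N D - ∫ t in (0:ℝ)..a, sp κ N t))
      (nhdsWithin 0 (Set.Ioi 0)) (nhds (kD κ N D)) := by
    have b1 := (t1.mul (t2.div t3 (ne_of_gt S_pos)))
    have b2 := t4.mul t5
    have := b1.add b2
    simpa using this
  refine big.congr' ?_
  filter_upwards [Ioo_mem_nhdsGT_of_mem (Set.mem_Ico.mpr ⟨le_refl (0:ℝ), hD⟩)] with a ha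
  have ha0 : 0 < a := ha.1
  have hsa : 0 < sK κ a := hpos _ ⟨ha.1, ha.2.le⟩
  have hspa : sp κ N a = sK κ a ^ (N - 1) := rfl
  have : (a / sK κ a) ^ (N - 1) = a ^ (N - 1) / sp κ N a := by
    rw [hspa, Real.div_rpow ha0.le hsa.le]
  rw [denom, this]
  ring

lemma tendsto_Phi (hN : 1 < N) (hD : 0 < D)
    (hc : Continuous (sK κ))
    (hpos : ∀ θ ∈ Set.Ioc (0:ℝ) D, 0 < sK κ θ)
    (hlim : Tendsto (fun θ => sK κ θ / θ) (nhdsWithin 0 (Set.Ioi 0)) (nhds 1)) :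
    Tendsto (fun a => kD κ N D * fKND κ N D a / a ^ (N - 1)) (nhdsWithin 0 (Set.Ioi 0))
      (nhds 1) := by
  have hN1 : (0:ℝ) < N - 1 := by linarith
  have kpos : 0 < kD κ N D := by
    apply intervalIntegral.intervalIntegral_pos_of_pos_on
    · apply Continuous.intervalIntegrable
      apply Continuous.rpow_const hc; exact fun x => Or.inr hN1.le
    · exact fun x hx => Real.rpow_pos_of_pos (hpos _ ⟨hx.1, hx.2.le⟩) _
    · exact hD
  have hQ := tendsto_Q hN hD hc hpos hlim
  have hdiv := (tendsto_const_nhds (x := kD κ N D)).div hQ (ne_of_gt kpos)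
  rw [div_self (ne_of_gt kpos)] at hdiv
  refine hdiv.congr' ?_
  filter_upwards [Ioo_mem_nhdsGT_of_mem (Set.mem_Ico.mpr ⟨le_refl (0:ℝ), hD⟩)] with a ha
  rw [fKND_eq hN hD hc hpos ha]
  have h1 : denom κ N D a ≠ 0 := ne_of_gt (denom_pos hN hD hc hpos ha)
  have h2 : a ^ (N - 1) ≠ 0 := ne_of_gt (Real.rpow_pos_of_pos ha.1 _)
  simp only [Pi.div_apply]
  field_simp


lemma fKND_pos (hN : 1 < N) (hD : 0 < D)
    (hc : Continuous (sK κ))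
    (hpos : ∀ θ ∈ Set.Ioc (0:ℝ) D, 0 < sK κ θ)
    {a : ℝ} (ha : a ∈ Set.Ioo (0:ℝ) D) : 0 < fKND κ N D a := by
  rw [fKND_eq hN hD hc hpos ha]
  exact inv_pos.mpr (denom_pos hN hD hc hpos ha)

lemma meas_eq (hN : 1 < N) (hD : 0 < D)
    (hc : Continuous (sK κ))
    (hpos : ∀ θ ∈ Set.Ioc (0:ℝ) D, 0 < sK κ θ)
    {a r : ℝ} (ha : a ∈ Set.Ioo (0:ℝ) D) (hr : r ∈ Set.Ioc (0:ℝ) a) :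
    (mcMeasure D (fun x => VolKN κ N D * hKND κ N D a x) (Set.Icc 0 r)).toReal =
      VolKN κ N D * fKND κ N D a * ((∫ x in (0:ℝ)..r, gg κ N D x) / gg κ N D a) := by
  have hN1 : (0:ℝ) < N - 1 := by linarith
  have hgg : Continuous (gg κ N D) := by
    apply Continuous.rpow_const (hc.comp (continuous_const.sub continuous_id))
    exact fun x => Or.inr hN1.le
  have ga_pos : 0 < gg κ N D a := by
    apply Real.rpow_pos_of_pos (hpos _ ⟨by linarith [ha.2], by linarith [ha.1.le]⟩)
  have kpos : 0 < kD κ N D := by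
    apply intervalIntegral.intervalIntegral_pos_of_pos_on
    · apply Continuous.intervalIntegrable
      apply Continuous.rpow_const hc; exact fun x => Or.inr hN1.le
    · exact fun x hx => Real.rpow_pos_of_pos (hpos _ ⟨hx.1, hx.2.le⟩) _
    · exact hD
  have Nω_pos : 0 < N * omegaN N := by
    apply mul_pos (by linarith)
    apply div_pos (Real.rpow_pos_of_pos Real.pi_pos _)
    apply Real.Gamma_pos_of_pos; linarith
  have Vpos : 0 < VolKN κ N D := mul_pos Nω_pos kpos
  have fpos : 0 < fKND κ N D a := fKND_pos hN hD hc hpos ha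
  set c : ℝ := VolKN κ N D * fKND κ N D a / gg κ N D a with hc_def
  have c_nonneg : 0 ≤ c := by positivity
  -- pointwise form on Icc 0 r
  have hpt : ∀ x ∈ Set.Icc (0:ℝ) r, VolKN κ N D * hKND κ N D a x = c * gg κ N D x := by
    intro x hx
    have hxa : x ≤ a := le_trans hx.2 hr.2
    have h1 : 0 < sK κ (D - x) := hpos _ ⟨by linarith [hx.2, hr.2, ha.2], by linarith [hx.1]⟩
    have h2 : 0 < sK κ (D - a) := hpos _ ⟨by linarith [ha.2], by linarith [ha.1.le]⟩
    rw [hKND, if_pos hxa, Real.div_rpow h1.le h2.le]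
    show VolKN κ N D * (fKND κ N D a * (gg κ N D x / gg κ N D a)) = _
    field_simp [hc_def]
    have hcg : c * gg κ N D a = VolKN κ N D * fKND κ N D a := by
      rw [hc_def]; exact div_mul_cancel₀ _ ga_pos.ne'
    linear_combination (-(gg κ N D x)) * hcg
  -- compute measure
  rw [mcMeasure, withDensity_apply _ measurableSet_Icc,
    Measure.restrict_restrict measurableSet_Icc,
    Set.inter_eq_left.mpr (Set.Icc_subset_Icc_right (by linarith [hr.2, ha.2] : r ≤ D))]
  have hcong : (∫⁻ x in Set.Icc (0:ℝ) r, ENNReal.ofReal (VolKN κ N D * hKND κ N D a x)) =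
      ∫⁻ x in Set.Icc (0:ℝ) r, ENNReal.ofReal (c * gg κ N D x) := by
    apply setLIntegral_congr_fun measurableSet_Icc
    intro x hx
    show ENNReal.ofReal _ = ENNReal.ofReal _
    rw [hpt x hx]
  rw [hcong]
  have hint : Integrable (fun x => c * gg κ N D x) (volume.restrict (Set.Icc (0:ℝ) r)) := by
    exact ((continuous_const.mul hgg).continuousOn.integrableOn_compact isCompact_Icc)
  have hnn : 0 ≤ᶠ[ae (volume.restrict (Set.Icc (0:ℝ) r))] fun x => c * gg κ N D x := by
    rw [EventuallyLE, ae_restrict_iff' measurableSet_Icc]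
    filter_upwards with x hx
    show (0:ℝ) ≤ c * gg κ N D x
    have h1 : 0 < sK κ (D - x) := hpos _ ⟨by linarith [hx.2, hr.2, ha.2], by linarith [hx.1]⟩
    exact mul_nonneg c_nonneg (Real.rpow_pos_of_pos h1 _).le
  rw [← ofReal_integral_eq_lintegral_ofReal hint hnn, ENNReal.toReal_ofReal]
  · rw [MeasureTheory.integral_const_mul, integral_Icc_eq_integral_Ioc,
      ← intervalIntegral.integral_of_le hr.1.le]
    rw [hc_def]
    field_simp
  · exact integral_nonneg_of_ae hnn

theorem main (hN : 1 < N) (hD : 0 < D)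
    (hc : Continuous (sK κ))
    (hpos : ∀ θ ∈ Set.Ioc (0:ℝ) D, 0 < sK κ θ)
    (hlim : Tendsto (fun θ => sK κ θ / θ) (nhdsWithin 0 (Set.Ioi 0)) (nhds 1)) :
    ∀ ε > 0, ∃ abar > 0, ∀ a ∈ Set.Ioo (0:ℝ) abar, ∀ r ∈ Set.Ioc (0:ℝ) a,
      |(mcMeasure D (fun x => VolKN κ N D * hKND κ N D a x) (Set.Icc 0 r)).toReal /
        (N * omegaN N * a ^ (N - 1) * r) - 1| ≤ ε := by
  intro ε hε
  have hN1 : (0:ℝ) < N - 1 := by linarith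
  have hgg : Continuous (gg κ N D) := by
    apply Continuous.rpow_const (hc.comp (continuous_const.sub continuous_id))
    exact fun x => Or.inr hN1.le
  set S := gg κ N D 0 with hS
  have S_pos : 0 < S := by
    apply Real.rpow_pos_of_pos
    rw [sub_zero]; exact hpos _ ⟨hD, le_refl _⟩
  set ε₁ : ℝ := min (ε/3) 1 with hε₁def
  have hε₁pos : 0 < ε₁ := lt_min (by linarith) one_pos
  have hε₁le1 : ε₁ ≤ 1 := min_le_right _ _
  have hε₁leε : ε₁ ≤ ε/3 := min_le_left _ _
  set δ : ℝ := ε₁ * S / 3 with hδdef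
  have δpos : 0 < δ := by positivity
  have δleS : δ ≤ S / 3 := by
    rw [hδdef]
    have : ε₁ * S ≤ 1 * S := mul_le_mul_of_nonneg_right hε₁le1 S_pos.le
    linarith
  obtain ⟨a₀, ha₀pos, ha₀⟩ : ∃ a₀ > 0, ∀ x : ℝ, |x| < a₀ → |gg κ N D x - S| < δ := by
    obtain ⟨d, dpos, hd⟩ := Metric.continuousAt_iff.mp (hgg.continuousAt (x := 0)) δ δpos
    refine ⟨d, dpos, fun x hx => ?_⟩
    have := hd (x := x) (by simpa [Real.dist_eq] using hx)
    simpa [Real.dist_eq, hS] using this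
  obtain ⟨a₁, ha₁pos, ha₁⟩ := Metric.tendsto_nhdsWithin_nhds.mp
    (tendsto_Phi hN hD hc hpos hlim) (ε/3) (by linarith)
  refine ⟨min (min a₀ a₁) D, lt_min (lt_min ha₀pos ha₁pos) hD, ?_⟩
  intro a ha r hr
  have haD : a ∈ Set.Ioo (0:ℝ) D := ⟨ha.1, lt_of_lt_of_le ha.2 (min_le_right _ _)⟩
  have haa0 : a < a₀ := lt_of_lt_of_le ha.2 (le_trans (min_le_left _ _) (min_le_left _ _))
  have haa1 : a < a₁ := lt_of_lt_of_le ha.2 (le_trans (min_le_left _ _) (min_le_right _ _))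
  have hga : |gg κ N D a - S| < δ := ha₀ a (by rw [abs_of_pos ha.1]; exact haa0)
  obtain ⟨hga1, hga2⟩ := abs_lt.mp hga
  have gapos : 0 < gg κ N D a := by linarith
  have rpos : 0 < r := hr.1
  -- integral bounds
  have ub : (∫ x in (0:ℝ)..r, gg κ N D x) ≤ (S + δ) * r := by
    have h := intervalIntegral.integral_mono_on hr.1.le (hgg.intervalIntegrable _ _)
      (intervalIntegrable_const (μ := volume)) (f := gg κ N D) (g := fun _ => S + δ) ?_
    · rw [intervalIntegral.integral_const, smul_eq_mul] at h
      linarith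
    · intro x hx
      have : |gg κ N D x - S| < δ := ha₀ x (by
        rw [abs_of_nonneg hx.1]; linarith [hx.2, hr.2])
      show gg κ N D x ≤ S + δ
      linarith [(abs_lt.mp this).2]
  have lb : (S - δ) * r ≤ ∫ x in (0:ℝ)..r, gg κ N D x := by
    have h := intervalIntegral.integral_mono_on hr.1.le
      (intervalIntegrable_const (μ := volume)) (hgg.intervalIntegrable _ _) (f := fun _ => S - δ)
      (g := gg κ N D) ?_
    · rw [intervalIntegral.integral_const, smul_eq_mul] at h
      linarith
    · intro x hx
      have : |gg κ N D x - S| < δ := ha₀ x (by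
        rw [abs_of_nonneg hx.1]; linarith [hx.2, hr.2])
      show S - δ ≤ gg κ N D x
      linarith [(abs_lt.mp this).1]
  set I := ∫ x in (0:ℝ)..r, gg κ N D x with hI
  set Ψ := I / (gg κ N D a * r) with hΨ
  have hgar : 0 < gg κ N D a * r := mul_pos gapos rpos
  have Ψub : Ψ ≤ 1 + ε₁ := by
    rw [hΨ, div_le_iff₀ hgar]
    nlinarith [mul_le_mul_of_nonneg_right hga1.le rpos.le,
      mul_pos hε₁pos (mul_pos S_pos rpos), mul_pos hε₁pos rpos]
  have Ψlb : 1 - ε₁ ≤ Ψ := by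
    rw [hΨ, le_div_iff₀ hgar]
    nlinarith [mul_le_mul_of_nonneg_right hga2.le rpos.le,
      mul_pos hε₁pos (mul_pos S_pos rpos), mul_nonneg (mul_nonneg (sub_nonneg.mpr hε₁le1) δpos.le) rpos.le]
  -- Phi bound
  have hΦb : |kD κ N D * fKND κ N D a / a ^ (N - 1) - 1| < ε/3 := by
    have := ha₁ (Set.mem_Ioi.mpr ha.1)
      (show dist a 0 < a₁ by rw [Real.dist_eq, sub_zero, abs_of_pos ha.1]; exact haa1)
    simpa [Real.dist_eq] using this
  -- ratio identity
  rw [meas_eq hN hD hc hpos haD hr]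
  have hNω : N * omegaN N ≠ 0 := by
    have : 0 < N * omegaN N := by
      apply mul_pos (by linarith)
      apply div_pos (Real.rpow_pos_of_pos Real.pi_pos _)
      apply Real.Gamma_pos_of_pos; linarith
    exact ne_of_gt this
  have han : a ^ (N - 1) ≠ 0 := ne_of_gt (Real.rpow_pos_of_pos ha.1 _)
  have key : VolKN κ N D * fKND κ N D a * (I / gg κ N D a) /
      (N * omegaN N * a ^ (N - 1) * r) =
      (kD κ N D * fKND κ N D a / a ^ (N - 1)) * Ψ := by
    rw [VolKN, hΨ]
    show N * omegaN N * kD κ N D * fKND κ N D a * (I / gg κ N D a) / _ = _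
    field_simp
    have hω : omegaN N * (omegaN N)⁻¹ = 1 := mul_inv_cancel₀ (right_ne_zero_of_mul hNω)
    linear_combination (kD κ N D * fKND κ N D a * I) * hω
  rw [key]
  set Φ := kD κ N D * fKND κ N D a / a ^ (N - 1) with hΦ
  have habs : |Φ * Ψ - 1| ≤ |Φ - 1| * |Ψ| + |Ψ - 1| := by
    have h : Φ * Ψ - 1 = (Φ - 1) * Ψ + (Ψ - 1) := by ring
    rw [h]
    exact le_trans (abs_add_le _ _) (by rw [abs_mul])
  have hΨabs : |Ψ| ≤ 2 := by
    rw [abs_le]; constructor <;> linarith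
  have hΨ1 : |Ψ - 1| ≤ ε₁ := abs_le.mpr ⟨by linarith, by linarith⟩
  have h1 : |Φ - 1| * |Ψ| ≤ (ε/3) * 2 :=
    mul_le_mul hΦb.le hΨabs (abs_nonneg _) (by linarith)
  linarith

end Stmt10Aux

open Stmt10Aux in
/-- for `m_a = Vol_{K,N}(D)·h^a_{K,N,D}·𝓛¹` on `[0,D]`, one has
`m_a([0,r]) = N ω_N a^(N-1) r (1+o(1))` for `0 < r ≤ a`, `a` small. -/
theorem stmt10 (N κ D : ℝ) (hN : 1 < N) (hκ : κ = -1 ∨ κ = 0 ∨ κ = 1)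
    (hD : 0 < D) (hDpi : κ = 1 → D < Real.pi) :
    ∀ ε > 0, ∃ abar > 0, ∀ a ∈ Set.Ioo (0:ℝ) abar, ∀ r ∈ Set.Ioc (0:ℝ) a,
      |(mcMeasure D (fun x => VolKN κ N D * hKND κ N D a x) (Set.Icc 0 r)).toReal /
        (N * omegaN N * a ^ (N - 1) * r) - 1| ≤ ε := by
  rcases hκ with h | h | h <;> subst h
  · have he : sK (-1) = Real.sinh := funext sK_neg_one
    exact main hN hD (by rw [he]; exact Real.continuous_sinh)
      (fun θ hθ => by rw [sK_neg_one]; exact Real.sinh_pos_iff.mpr hθ.1)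
      (by simpa [he] using sinh_div_lim)
  · have he : ∀ θ, sK 0 θ = θ := sK_zero
    refine main hN hD (by rw [funext he]; exact continuous_id)
      (fun θ hθ => by rw [he]; exact hθ.1) ?_
    refine tendsto_const_nhds.congr' ?_
    filter_upwards [self_mem_nhdsWithin] with θ hθ
    rw [he, div_self (ne_of_gt hθ)]
  · have he : sK 1 = Real.sin := funext sK_one
    exact main hN hD (by rw [he]; exact Real.continuous_sin)
      (fun θ hθ => by
        rw [sK_one]
        exact Real.sin_pos_of_pos_of_lt_pi hθ.1 (lt_of_le_of_lt hθ.2 (hDpi rfl)))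
      (by simpa [he] using sin_div_lim)
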